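/- Let ψ : Γ × Γ × G/N → U(1) and φ : Γ × G × G/N → U(1) satisfy, for all a, b ∈ Γ, g, h ∈ G, z ∈ G/N: (R2) φ(b, g, z + χ(a)) · φ(ba, g, z)⁻¹ · φ(a, g, z) = ψ(a, b, z + π(g)) · ψ(a, b, z)⁻¹, and (R3) φ(a, g + h, z) = φ(a, h, z + π(g)) · φ(a, g, z). Then: (i) for every a ∈ Γ, n ∈ N and z ∈ G/N one has φ(a, n, z) = φ(a, n, 0); (ii) for every a ∈ Γ the map N → U(1), n ↦ φ(a, n, 0)⁻¹, is a group homomorphism; (iii) the resulting map χ̂₀ : Γ → Hom(N, U(1)), defined by χ̂₀(a)(n) := φ(a, n, 0)⁻¹, is a group homomorphism. -/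

import Mathlib

/-- `Γ` is a finite group, `G` a second-countable locally compact Hausdorff abelian topological
group, `N ≤ G` a discrete subgroup with `G/N` compact, `χ : Γ → G/N` a homomorphism, and
`ψ : Γ × Γ × G/N → U(1)`, `φ : Γ × G × G/N → U(1)` satisfy (R2) and (R3).  Then
(i)   `φ(a, n, z) = φ(a, n, 0)` for `n ∈ N`;
(ii)  for each `a`, the map `N → U(1)`, `n ↦ φ(a, n, 0)⁻¹`, is a group homomorphism;
(iii) the map `χ̂₀ : Γ → Hom(N, U(1))`, `χ̂₀(a)(n) := φ(a, n, 0)⁻¹`, is a group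
homomorphism. -/
theorem statement2
    {Γ : Type*} [Group Γ] [Finite Γ]
    {G : Type*} [AddCommGroup G] [TopologicalSpace G] [IsTopologicalAddGroup G]
      [LocallyCompactSpace G] [SecondCountableTopology G] [T2Space G]
    (N : AddSubgroup G) [DiscreteTopology N] [CompactSpace (G ⧸ N)]
    (χ : Γ → G ⧸ N) (hχ : ∀ a b : Γ, χ (a * b) = χ a + χ b)
    (ψ : Γ → Γ → (G ⧸ N) → Circle) (φ : Γ → G → (G ⧸ N) → Circle)
    (R2 : ∀ (a b : Γ) (g : G) (z : G ⧸ N),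
      φ b g (z + χ a) * (φ (b * a) g z)⁻¹ * φ a g z = ψ a b (z + (g : G ⧸ N)) * (ψ a b z)⁻¹)
    (R3 : ∀ (a : Γ) (g h : G) (z : G ⧸ N),
      φ a (g + h) z = φ a h (z + (g : G ⧸ N)) * φ a g z) :
    -- (i)
    (∀ (a : Γ) (n : N) (z : G ⧸ N), φ a (n : G) z = φ a (n : G) 0) ∧
    -- (ii)
    (∀ (a : Γ) (n n' : N),
      (φ a ((n + n' : N) : G) 0)⁻¹ = (φ a (n : G) 0)⁻¹ * (φ a (n' : G) 0)⁻¹) ∧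
    -- (iii)
    (∀ (a b : Γ) (n : N),
      (φ (a * b) (n : G) 0)⁻¹ = (φ a (n : G) 0)⁻¹ * (φ b (n : G) 0)⁻¹) := by

  have hN : ∀ n : N, ((n : G) : G ⧸ N) = 0 := fun n =>
    (QuotientAddGroup.eq_zero_iff _).mpr n.2
  -- key: φ a n (z + π g) = φ a n z
  have key : ∀ (a : Γ) (n : N) (g : G) (z : G ⧸ N),
      φ a (n : G) (z + (g : G ⧸ N)) = φ a (n : G) z := by
    intro a n g z
    have h1 := R3 a (n : G) g z
    have h2 := R3 a g (n : G) z
    rw [hN n, add_zero] at h1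
    rw [add_comm g (n:G), h1, mul_comm (φ a g z)] at h2
    exact mul_right_cancel h2.symm
  have hi : ∀ (a : Γ) (n : N) (z : G ⧸ N), φ a (n : G) z = φ a (n : G) 0 := by
    intro a n z
    obtain ⟨g, rfl⟩ := QuotientAddGroup.mk_surjective z
    have := key a n g 0
    rwa [zero_add] at this
  refine ⟨hi, ?_, ?_⟩
  · intro a n n'
    have h := R3 a (n : G) (n' : G) 0
    rw [hN n, add_zero] at h
    push_cast at h ⊢
    rw [h, mul_inv, mul_comm]
  · intro a b n
    have h := R2 b a (n : G) 0
    rw [hN n, add_zero, mul_inv_cancel, zero_add] at h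
    rw [hi a n (χ b)] at h
    rw [show (φ (a * b) (n : G) 0)⁻¹ = (φ a (n : G) 0)⁻¹ *
        (φ a (n : G) 0 * (φ (a * b) (n : G) 0)⁻¹ * φ b (n : G) 0) * (φ b (n : G) 0)⁻¹ from by
      group, h]
    group
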